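/- For every a with 0 ≤ a < 4, the number of elements w ∈ D_0 satisfying g^a + w ≡ 0 (mod p) is exactly (q-1)/4. -/

import Mathlib

lemma countRangeMod (m k r : ℕ) (hm : 0 < m) (hr : r < m) :
    ((Finset.range (m * k)).filter (fun s => s % m = r)).card = k := by
  have hset : ((Finset.range (m * k)).filter (fun s => s % m = r))
      = (Finset.range k).image (fun t => m * t + r) := by
    ext s
    simp only [Finset.mem_filter, Finset.mem_range, Finset.mem_image]
    constructor
    · rintro ⟨hs, hmod⟩
      refine ⟨s / m, ?_, ?_⟩
      · exact Nat.div_lt_of_lt_mul (by omega)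
      · have := Nat.div_add_mod s m; omega
    · rintro ⟨t, ht, rfl⟩
      constructor
      · calc m * t + r < m * t + m := by omega
          _ = m * (t + 1) := by ring
          _ ≤ m * k := Nat.mul_le_mul_left m ht
      · rw [Nat.mul_add_mod, Nat.mod_eq_of_lt hr]
  rw [hset, Finset.card_image_of_injective _ (fun a b hab => Nat.eq_of_mul_eq_mul_left hm (Nat.add_right_cancel hab)), Finset.card_range]

lemma powEqPowIffUnit {M : Type*} [Monoid M] (u : Mˣ) (n m : ℕ) :
    (u : M) ^ n = (u : M) ^ m ↔ n ≡ m [MOD orderOf (u : M)] := by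
  rw [← Units.val_pow_eq_pow_val, ← Units.val_pow_eq_pow_val, Units.val_inj,
    orderOf_units, pow_eq_pow_iff_modEq]

theorem stmt6
    (p q : ℕ) (hp : Nat.Prime p) (hq : Nat.Prime q) (hne : p ≠ q)
    (hpo : Odd p) (hqo : Odd q)
    (hgcd : Nat.gcd (p - 1) (q - 1) = 4)
    (e : ℕ) (he : e = (p - 1) * (q - 1) / 4)
    (g h : ℕ)
    (hgp : orderOf (g : ZMod p) = p - 1)
    (hgq : orderOf (g : ZMod q) = q - 1)
    (hhp : (h : ZMod p) = (g : ZMod p))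
    (hhq : (h : ZMod q) = 1)
    (D : ℕ → Finset (ZMod (p * q)))
    (hD : ∀ i, D i = (Finset.range (e / 4) ×ˢ Finset.range 4).image
        (fun sj => (g : ZMod (p * q)) ^ (4 * sj.1 + i) * (h : ZMod (p * q)) ^ sj.2))
 :
    ∀ a < 4,
      ((D 0).filter (fun w =>
        (g : ZMod p) ^ a + ZMod.castHom (dvd_mul_right p q) (ZMod p) w = 0)).card
      = (q - 1) / 4 := by
  intro a ha
  haveI := Fact.mk hp
  haveI := Fact.mk hq
  have hp1 : 1 < p := hp.one_lt
  have hq1 : 1 < q := hq.one_lt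
  obtain ⟨m, hm⟩ : 4 ∣ p - 1 := hgcd ▸ Nat.gcd_dvd_left _ _
  obtain ⟨k, hk⟩ : 4 ∣ q - 1 := hgcd ▸ Nat.gcd_dvd_right _ _
  have hm0 : 0 < m := by omega
  have hk0 : 0 < k := by omega
  have hN : e / 4 = m * k := by
    subst he; rw [hm, hk]
    have h1 : 4 * m * (4 * k) = 4 * (4 * (m * k)) := by ring
    rw [h1, Nat.mul_div_cancel_left _ (by norm_num), Nat.mul_div_cancel_left _ (by norm_num)]
  have hmk : Nat.Coprime m k := by
    have := hgcd
    rw [hm, hk, Nat.gcd_mul_left] at this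
    unfold Nat.Coprime; omega
  set gp : ZMod p := (g : ZMod p) with hgpdef
  set gq : ZMod q := (g : ZMod q) with hgqdef
  have hogp : orderOf gp = 4 * m := by rw [hgp, hm]
  have hogq : orderOf gq = 4 * k := by rw [hgq, hk]
  have hgp0 : gp ≠ 0 := by
    intro h0
    have h1 : gp ^ (4 * m) = 1 := by rw [← hogp]; exact pow_orderOf_eq_one gp
    rw [h0, zero_pow (by omega)] at h1
    exact zero_ne_one h1
  have hgq0 : gq ≠ 0 := by
    intro h0
    have h1 : gq ^ (4 * k) = 1 := by rw [← hogq]; exact pow_orderOf_eq_one gq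
    rw [h0, zero_pow (by omega)] at h1
    exact zero_ne_one h1
  set up : (ZMod p)ˣ := Units.mk0 gp hgp0 with hupdef
  set uq : (ZMod q)ˣ := Units.mk0 gq hgq0 with huqdef
  have hiffp : ∀ n n' : ℕ, gp ^ n = gp ^ n' ↔ n ≡ n' [MOD 4 * m] := by
    intro n n'
    have := powEqPowIffUnit up n n'
    simpa [hupdef, hogp] using this
  have hiffq : ∀ n n' : ℕ, gq ^ n = gq ^ n' ↔ n ≡ n' [MOD 4 * k] := by
    intro n n'
    have := powEqPowIffUnit uq n n'
    simpa [huqdef, hogq] using this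
  -- gp ^ (2*m) = -1
  have hneg : gp ^ (2 * m) = -1 := by
    have hsq : gp ^ (2 * m) * gp ^ (2 * m) = 1 := by
      rw [← pow_add]
      have : 2 * m + 2 * m = 4 * m := by ring
      rw [this, ← hogp, pow_orderOf_eq_one]
    rcases mul_self_eq_one_iff.mp hsq with h1 | h1
    · exfalso
      have hd : orderOf gp ∣ 2 * m := orderOf_dvd_of_pow_eq_one h1
      rw [hogp] at hd
      have := Nat.le_of_dvd (by omega) hd
      omega
    · exact h1
  set π := ZMod.castHom (dvd_mul_right p q) (ZMod p) with hπdef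
  set ρ := ZMod.castHom (dvd_mul_left q p) (ZMod q) with hρdef
  set f : ℕ × ℕ → ZMod (p * q) :=
    fun sj => (g : ZMod (p * q)) ^ (4 * sj.1 + 0) * (h : ZMod (p * q)) ^ sj.2 with hfdef
  have hπf : ∀ sj : ℕ × ℕ, π (f sj) = gp ^ (4 * sj.1 + sj.2) := by
    intro sj
    simp only [hfdef, map_mul, map_pow, map_natCast, hhp, ← hgpdef, pow_add, pow_zero, mul_one]
  have hρf : ∀ sj : ℕ × ℕ, ρ (f sj) = gq ^ (4 * sj.1) := by
    intro sj
    simp only [hfdef, map_mul, map_pow, map_natCast, hhq, one_pow, mul_one, add_zero, ← hgqdef]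
  set S := Finset.range (e / 4) ×ˢ Finset.range 4 with hSdef
  have hinj : Set.InjOn f S := by
    intro x hx y hy hxy
    simp only [hSdef, Finset.coe_product, Set.mem_prod, Finset.mem_coe, Finset.mem_range,
      hN] at hx hy
    have hπ' : gp ^ (4 * x.1 + x.2) = gp ^ (4 * y.1 + y.2) := by
      rw [← hπf, ← hπf, hxy]
    have hρ' : gq ^ (4 * x.1) = gq ^ (4 * y.1) := by
      rw [← hρf, ← hρf, hxy]
    rw [hiffp] at hπ'
    rw [hiffq] at hρ'
    have hj : x.2 = y.2 := by
      have h4 : (4 : ℕ) ∣ 4 * m := ⟨m, rfl⟩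
      have := hπ'.of_dvd h4
      unfold Nat.ModEq at this
      omega
    have hx1 : x.1 % m = y.1 % m := by
      rw [hj] at hπ'
      have h1 : 4 * x.1 ≡ 4 * y.1 [MOD 4 * m] := Nat.ModEq.add_right_cancel' _ hπ'
      unfold Nat.ModEq at h1
      rw [Nat.mul_mod_mul_left, Nat.mul_mod_mul_left] at h1
      omega
    have hx1' : x.1 % k = y.1 % k := by
      unfold Nat.ModEq at hρ'
      rw [Nat.mul_mod_mul_left, Nat.mul_mod_mul_left] at hρ'
      omega
    have hmod : x.1 ≡ y.1 [MOD m * k] :=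
      (Nat.modEq_and_modEq_iff_modEq_mul hmk).mp ⟨hx1, hx1'⟩
    unfold Nat.ModEq at hmod
    rw [Nat.mod_eq_of_lt hx.1, Nat.mod_eq_of_lt hy.1] at hmod
    exact Prod.ext hmod hj
  rw [hD 0, Finset.filter_image]
  rw [Finset.card_image_of_injOn (hinj.mono (by
    intro x hx
    exact Finset.mem_coe.mpr (Finset.mem_of_mem_filter _ hx)))]
  -- characterize the condition
  set c := 2 * m + a with hcdef
  set d := c / 4 with hddef
  set j0 := c % 4 with hj0def
  have hc4 : c = 4 * d + j0 := (Nat.div_add_mod c 4).symm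
  have hcond : ∀ sj : ℕ × ℕ,
      (gp ^ a + π (f sj) = 0) ↔ (4 * sj.1 + sj.2 ≡ c [MOD 4 * m]) := by
    intro sj
    rw [hπf]
    constructor
    · intro h0
      have : gp ^ (4 * sj.1 + sj.2) = gp ^ c := by
        have : gp ^ (4 * sj.1 + sj.2) = -gp ^ a := by linear_combination h0
        rw [this, hcdef, pow_add, hneg]; ring
      exact (hiffp _ _).mp this
    · intro hmod
      have : gp ^ (4 * sj.1 + sj.2) = gp ^ c := (hiffp _ _).mpr hmod
      rw [this, hcdef, pow_add, hneg]; ring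
  have hfilter : S.filter (fun sj => gp ^ a + π (f sj) = 0)
      = ((Finset.range (m * k)).filter (fun s => s % m = d % m)) ×ˢ {j0} := by
    ext ⟨s, j⟩
    simp only [Finset.mem_filter, Finset.mem_product, Finset.mem_range, Finset.mem_singleton,
      hSdef, hN, hcond]
    constructor
    · rintro ⟨⟨hs, hj⟩, hmod⟩
      have hj' : j = j0 := by
        have h4 : (4 : ℕ) ∣ 4 * m := ⟨m, rfl⟩
        have := hmod.of_dvd h4
        unfold Nat.ModEq at this
        omega
      refine ⟨⟨hs, ?_⟩, hj'⟩
      rw [hj', hc4] at hmod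
      have h1 : 4 * s ≡ 4 * d [MOD 4 * m] := Nat.ModEq.add_right_cancel' _ hmod
      unfold Nat.ModEq at h1
      rw [Nat.mul_mod_mul_left, Nat.mul_mod_mul_left] at h1
      omega
    · rintro ⟨⟨hs, hsm⟩, rfl⟩
      refine ⟨⟨hs, by omega⟩, ?_⟩
      rw [hc4]
      refine Nat.ModEq.add_right _ ?_
      unfold Nat.ModEq
      rw [Nat.mul_mod_mul_left, Nat.mul_mod_mul_left, hsm]
  rw [hfilter, Finset.card_product, Finset.card_singleton,
    countRangeMod m k (d % m) hm0 (Nat.mod_lt _ hm0), mul_one, hk,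
    Nat.mul_div_cancel_left _ (by norm_num)]
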